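/- Let H be a complex Hilbert space and J a symmetry on H (J = J* = J⁻¹). If U is a bounded operator on H with U*JU = J and U invertible (i.e., U is J-unitary) and ‖U − I‖ < 1, then there exists a bounded operator X with JX*J = −X (X is J-antihermitian) such that U = exp(X). -/

import Mathlib

open NormedSpace Set

set_option linter.unusedSectionVars false
set_option maxHeartbeats 1000000

section Core

variable {A : Type*} [NormedRing A] [NormedAlgebra ℂ A] [CompleteSpace A]

lemma commute_tsum {x : A} {f : ℕ → A} (hf : Summable f) (h : ∀ n, Commute x (f n)) :
    Commute x (∑' n, f n) := by
  have h1 : x * ∑' n, f n = ∑' n, x * f n := (hf.tsum_mul_left x).symm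
  have h2 : (∑' n, f n) * x = ∑' n, f n * x := (hf.tsum_mul_right x).symm
  unfold Commute SemiconjBy
  rw [h1, h2]
  exact tsum_congr fun n => h n

theorem core (ψ : A →L[ℝ] A) (hψ1 : ψ 1 = 1)
    (hψm : ∀ x y : A, ψ (x * y) = ψ y * ψ x)
    (hψs : ∀ (c : ℂ) (x : A), ψ (c • x) = (starRingEnd ℂ c) • ψ x)
    (a : A) (ha : ‖a‖ < 1) (ha0 : a ≠ 0)
    (hab : (1 + a) * (1 + ψ a) = 1) (hba : (1 + ψ a) * (1 + a) = 1) :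
    ∃ X : A, ψ X = -X ∧ NormedSpace.exp X = 1 + a := by
  set b : A := ψ a with hbdef
  set r : ℝ := ‖a‖ with hrdef
  have hr0 : 0 < r := norm_pos_iff.mpr ha0
  set R : ℝ := (1 + r⁻¹) / 2 with hRdef
  have hR1 : 1 < R := by
    have : 1 < r⁻¹ := (one_lt_inv₀ hr0).mpr ha
    rw [hRdef]; linarith
  have hR0 : 0 < R := lt_trans one_pos hR1
  have hRr : R * r < 1 := by
    rw [hRdef]
    have : r⁻¹ * r = 1 := inv_mul_cancel₀ (ne_of_gt hr0)
    calc (1 + r⁻¹) / 2 * r = (r + r⁻¹ * r) / 2 := by ring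
    _ = (r + 1) / 2 := by rw [this]
    _ < 1 := by linarith
  have hRr0 : 0 ≤ R * r := le_of_lt (mul_pos hR0 hr0)
  -- the log series and its derivative
  set g : ℕ → ℝ → A := fun n t => ((-1 : ℝ) ^ n * t ^ (n + 1) / (n + 1)) • a ^ (n + 1) with hgdef
  set g' : ℕ → ℝ → A := fun n t => ((-1 : ℝ) ^ n * t ^ n) • a ^ (n + 1) with hg'def
  set u : ℕ → ℝ := fun n => r * (R * r) ^ n with hudef
  have hu : Summable u := (summable_geometric_of_lt_one hRr0 hRr).mul_left r
  have hIccIoo : Icc (0 : ℝ) 1 ⊆ Ioo (-R) R := fun x hx =>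
    ⟨lt_of_lt_of_le (neg_lt_zero.mpr hR0) hx.1, lt_of_le_of_lt hx.2 hR1⟩
  have habs : ∀ t ∈ Ioo (-R) R, |t| ≤ R := fun t ht => le_of_lt (abs_lt.mpr ⟨ht.1, ht.2⟩)
  have hgderiv : ∀ (n : ℕ) (t : ℝ), HasDerivAt (g n) (g' n t) t := by
    intro n t
    have h1 : HasDerivAt (fun t : ℝ => (-1 : ℝ) ^ n * t ^ (n + 1) / (n + 1))
        ((-1 : ℝ) ^ n * t ^ n) t := by
      have h2 := ((hasDerivAt_pow (n + 1) t).const_mul ((-1 : ℝ) ^ n)).div_const ((n : ℝ) + 1)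
      have hne : (n : ℝ) + 1 ≠ 0 := by positivity
      refine h2.congr_deriv ?_
      rw [Nat.add_sub_cancel, Nat.cast_add_one, mul_left_comm]
      exact mul_div_cancel_left₀ _ hne
    exact h1.smul_const _
  have hnormpow : ∀ n : ℕ, ‖a ^ (n + 1)‖ ≤ r ^ (n + 1) := fun n =>
    norm_pow_le' a (Nat.succ_pos n)
  have hg'bound : ∀ (n : ℕ), ∀ t ∈ Ioo (-R) R, ‖g' n t‖ ≤ u n := by
    intro n t ht
    rw [hg'def, hudef]
    simp only [norm_smul]
    have h1 : ‖(-1 : ℝ) ^ n * t ^ n‖ ≤ R ^ n := by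
      rw [norm_mul, norm_pow, norm_pow, norm_neg, norm_one, one_pow, one_mul]
      exact pow_le_pow_left₀ (norm_nonneg t) (habs t ht) n
    calc ‖(-1 : ℝ) ^ n * t ^ n‖ * ‖a ^ (n + 1)‖ ≤ R ^ n * r ^ (n + 1) := by
          apply mul_le_mul h1 (hnormpow n) (norm_nonneg _) (by positivity)
    _ = r * (R * r) ^ n := by rw [mul_pow, pow_succ]; ring
  have hgsummable : ∀ t ∈ Ioo (-R) R, Summable fun n => g n t := by
    intro t ht
    apply Summable.of_norm_bounded (g := fun n => R * u n) (hu.mul_left R)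
    intro n
    rw [hgdef, hudef]
    simp only [norm_smul]
    have h1 : ‖(-1 : ℝ) ^ n * t ^ (n + 1) / (n + 1)‖ ≤ R ^ (n + 1) := by
      rw [norm_div, norm_mul, norm_pow, norm_pow, norm_neg, norm_one, one_pow, one_mul]
      have h2 : ‖t‖ ^ (n + 1) ≤ R ^ (n + 1) := pow_le_pow_left₀ (norm_nonneg t) (habs t ht) _
      have h3 : (1 : ℝ) ≤ ‖((n : ℝ) + 1)‖ := by
        rw [Real.norm_eq_abs, abs_of_nonneg (by positivity)]; simp
      calc ‖t‖ ^ (n + 1) / ‖((n : ℝ) + 1)‖ ≤ ‖t‖ ^ (n + 1) := div_le_self (by positivity) h3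
      _ ≤ R ^ (n + 1) := h2
    calc ‖(-1 : ℝ) ^ n * t ^ (n + 1) / (n + 1)‖ * ‖a ^ (n + 1)‖
        ≤ R ^ (n + 1) * r ^ (n + 1) := by
          apply mul_le_mul h1 (hnormpow n) (norm_nonneg _) (by positivity)
    _ = R * (r * (R * r) ^ n) := by rw [pow_succ, pow_succ, mul_pow]; ring
  have hg'summable : ∀ t ∈ Ioo (-R) R, Summable fun n => g' n t := fun t ht =>
    Summable.of_norm_bounded hu fun n => hg'bound n t ht
  set L : ℝ → A := fun t => ∑' n, g n t with hLdef
  set D : ℝ → A := fun t => ∑' n, g' n t with hDdef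
  have hg0 : ∀ n, g n 0 = 0 := by
    intro n; rw [hgdef]; simp
  have hL0 : L 0 = 0 := by rw [hLdef]; simp only [hg0]; exact tsum_zero
  have h0mem : (0 : ℝ) ∈ Ioo (-R) R := ⟨neg_lt_zero.mpr hR0, hR0⟩
  have h1mem : (1 : ℝ) ∈ Ioo (-R) R := hIccIoo ⟨zero_le_one, le_refl 1⟩
  have hLderiv : ∀ t ∈ Ioo (-R) R, HasDerivAt L (D t) t := by
    intro t ht
    exact hasDerivAt_tsum_of_isPreconnected hu isOpen_Ioo (convex_Ioo _ _).isPreconnected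
      (fun n y _ => hgderiv n y) hg'bound h0mem
      (by simp only [hg0]; exact summable_zero) ht
  -- commutation facts
  have hcomm_ag : ∀ n t, Commute a (g n t) := fun n t =>
    (((Commute.refl a).pow_right (n + 1)).smul_right _)
  have hcomm_ag' : ∀ n t, Commute a (g' n t) := fun n t =>
    (((Commute.refl a).pow_right (n + 1)).smul_right _)
  have hcomm_aL : ∀ t ∈ Ioo (-R) R, Commute a (L t) := fun t ht =>
    commute_tsum (hgsummable t ht) fun n => hcomm_ag n t
  have hcomm_aD : ∀ t ∈ Ioo (-R) R, Commute a (D t) := fun t ht =>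
    commute_tsum (hg'summable t ht) fun n => hcomm_ag' n t
  have hcomm_xL : ∀ (x : A), Commute a x → ∀ t ∈ Ioo (-R) R, Commute x (L t) := by
    intro x hx t ht
    exact commute_tsum (hgsummable t ht) fun n =>
      ((hx.symm.pow_right (n + 1)).smul_right _)
  have hcomm_xD : ∀ (x : A), Commute a x → ∀ t ∈ Ioo (-R) R, Commute x (D t) := by
    intro x hx t ht
    exact commute_tsum (hg'summable t ht) fun n =>
      ((hx.symm.pow_right (n + 1)).smul_right _)
  have hcomm_LL : ∀ s ∈ Ioo (-R) R, ∀ t ∈ Ioo (-R) R, Commute (L s) (L t) := fun s hs t ht =>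
    hcomm_xL (L s) (hcomm_aL s hs) t ht
  -- the key algebraic identity for D
  have hDmul : ∀ t ∈ Ioo (-R) R, D t * (1 + t • a) = a := by
    intro t ht
    have hy : ‖-(t • a)‖ < 1 := by
      rw [norm_neg, norm_smul]
      calc ‖t‖ * ‖a‖ ≤ R * r := by
            apply mul_le_mul (habs t ht) (le_refl _) (norm_nonneg _) (le_of_lt hR0)
      _ < 1 := hRr
    set y : A := -(t • a) with hydef
    have hgeom : Summable fun n => y ^ n := summable_geometric_of_norm_lt_one hy
    have hterm : ∀ n, g' n t = y ^ n * a := by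
      intro n
      rw [hg'def, hydef]
      have hns : -(t • a) = (-t) • a := by rw [neg_smul]
      rw [hns, smul_pow, smul_mul_assoc, ← pow_succ]
      congr 1
      rw [← neg_one_mul t, mul_pow]
    have hD : D t = (∑' n, y ^ n) * a := by
      rw [hDdef]
      simp only [hterm]
      exact hgeom.tsum_mul_right a
    have h1a : (1 : A) + t • a = 1 - y := by rw [hydef, sub_neg_eq_add]
    have hay : Commute a (1 - y) := by
      apply Commute.sub_right (Commute.one_right a)
      rw [hydef]
      exact (((Commute.refl a).smul_right t).neg_right)
    rw [hD, h1a, mul_assoc, hay.eq, ← mul_assoc, geom_series_mul_neg y hy, one_mul]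
  -- derivative of t ↦ exp (-(L t))
  have hexpderiv : ∀ s ∈ Ioo (-R) R,
      HasDerivAt (fun t => exp (-(L t))) (-(D s) * exp (-(L s))) s := by
    intro s hs
    have hsplit : ∀ t ∈ Ioo (-R) R,
        exp (-(L t)) = exp (-(L t) + L s) * exp (-(L s)) := by
      intro t ht
      have hC : Commute (-(L t) + L s) (-(L s)) :=
        (((hcomm_LL t ht s hs).neg_left).add_left (Commute.refl (L s))).neg_right
      letI : NormedAlgebra ℚ A := NormedAlgebra.restrictScalars ℚ ℂ A
      rw [← exp_add_of_commute hC]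
      congr 1
      abel
    have hφ : HasDerivAt (fun t => -(L t) + L s) (-(D s)) s :=
      ((hLderiv s hs).neg).add_const _
    have hφs : -(L s) + L s = 0 := by abel
    have hexp0 : HasFDerivAt exp ((1 : A →L[ℂ] A).restrictScalars ℝ)
        ((fun t => -(L t) + L s) s) := by
      simp only [hφs]
      exact (hasFDerivAt_exp_zero (𝕂 := ℂ)).restrictScalars ℝ
    have hcomp : HasDerivAt (fun t => exp (-(L t) + L s)) (-(D s)) s := by
      have := hexp0.comp_hasDerivAt s hφ
      simp at this
      exact this
    have hmul : HasDerivAt (fun t => exp (-(L t) + L s) * exp (-(L s)))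
        (-(D s) * exp (-(L s))) s := hcomp.mul_const _
    apply hmul.congr_of_eventuallyEq
    filter_upwards [isOpen_Ioo.mem_nhds hs] with t ht using hsplit t ht
  set E : ℝ → A := fun t => exp (-(L t)) * (1 + t • a) with hEdef
  have hEderiv : ∀ s ∈ Ioo (-R) R, HasDerivAt E 0 s := by
    intro s hs
    have hlin : HasDerivAt (fun t : ℝ => (1 : A) + t • a) a s := by
      have := ((hasDerivAt_id s).smul_const a).const_add (1 : A)
      simpa using this
    have h := (hexpderiv s hs).mul hlin
    have hDe : Commute (D s) (exp (-(L s))) :=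
      ((hcomm_xD (L s) (hcomm_aL s hs) s hs).symm.neg_right).exp_right
    have hval : -(D s) * exp (-(L s)) * (1 + s • a) + exp (-(L s)) * a = 0 := by
      calc -(D s) * exp (-(L s)) * (1 + s • a) + exp (-(L s)) * a
          = -(D s * exp (-(L s)) * (1 + s • a)) + exp (-(L s)) * a := by
            rw [neg_mul, neg_mul]
      _ = -(exp (-(L s)) * (D s * (1 + s • a))) + exp (-(L s)) * a := by
            rw [hDe.eq, mul_assoc]
      _ = 0 := by rw [hDmul s hs, neg_add_cancel]
    rw [← hval]
    exact h
  have hEIcc : ∀ t ∈ Icc (0:ℝ) 1, E t = 1 := by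
    have hE0 : E 0 = 1 := by
      rw [hEdef]; simp [hL0]
    have := constant_of_has_deriv_right_zero (f := E) (a := 0) (b := 1)
      (fun x hx => (hEderiv x (hIccIoo hx)).continuousAt.continuousWithinAt)
      (fun x hx => (hEderiv x (hIccIoo ⟨hx.1, le_of_lt hx.2⟩)).hasDerivWithinAt)
    intro t ht
    rw [this t ht, hE0]
  -- exp (L t) = 1 + t • a on Icc 0 1
  have hexpinv : ∀ t ∈ Ioo (-R) R, exp (L t) * exp (-(L t)) = 1 := by
    intro t ht
    letI : NormedAlgebra ℚ A := NormedAlgebra.restrictScalars ℚ ℂ A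
    rw [← exp_add_of_commute (Commute.refl (L t)).neg_right, add_neg_cancel, exp_zero]
  have hexpL : ∀ t ∈ Icc (0:ℝ) 1, exp (L t) = 1 + t • a := by
    intro t ht
    have h1 : exp (-(L t)) * (1 + t • a) = 1 := hEIcc t ht
    calc exp (L t) = exp (L t) * (exp (-(L t)) * (1 + t • a)) := by rw [h1, mul_one]
    _ = exp (L t) * exp (-(L t)) * (1 + t • a) := by rw [mul_assoc]
    _ = 1 + t • a := by rw [hexpinv t (hIccIoo ht), one_mul]
  -- properties of ψ
  have hψpow : ∀ (x : A) (n : ℕ), ψ (x ^ n) = (ψ x) ^ n := by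
    intro x n
    induction n with
    | zero => simpa using hψ1
    | succ k ih => rw [pow_succ, hψm, ih, pow_succ']
  have hψexp : ∀ x : A, ψ (exp x) = exp (ψ x) := by
    intro x
    have h1 : HasSum (fun n : ℕ => ((n.factorial : ℂ)⁻¹) • x ^ n) (exp x) :=
      exp_series_hasSum_exp' x
    have h2 := h1.mapL ψ
    have h3 : ∀ n : ℕ, ψ (((n.factorial : ℂ)⁻¹) • x ^ n)
        = ((n.factorial : ℂ)⁻¹) • (ψ x) ^ n := by
      intro n
      rw [hψs, hψpow]
      congr 1
      simp
    simp only [h3] at h2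
    exact h2.unique (exp_series_hasSum_exp' (ψ x))
  have hψsmulR : ∀ (t : ℝ) (x : A), ψ (t • x) = t • ψ x := fun t x => ψ.map_smul t x
  -- q t = 1 + t • b is exp of N t
  set N : ℝ → A := fun t => ψ (L t) with hNdef
  have hψp : ∀ t : ℝ, ψ (1 + t • a) = 1 + t • b := by
    intro t
    rw [map_add, hψ1, hψsmulR, hbdef]
  have hexpN : ∀ t ∈ Icc (0:ℝ) 1, exp (N t) = 1 + t • b := by
    intro t ht
    rw [hNdef, ← hψexp, hexpL t ht, hψp]
  have hNderiv : ∀ t ∈ Ioo (-R) R, HasDerivAt N (ψ (D t)) t := by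
    intro t ht
    exact (ψ.hasFDerivAt.comp_hasDerivAt t (hLderiv t ht))
  -- algebra of a and b
  have habm : a + b + a * b = 0 := by
    have h : (1 + a) * (1 + b) = 1 + (a + b + a * b) := by noncomm_ring
    exact add_eq_left.mp (h.symm.trans hab)
  have hbam : a + b + b * a = 0 := by
    have h : (1 + b) * (1 + a) = 1 + (a + b + b * a) := by noncomm_ring
    exact add_eq_left.mp (h.symm.trans hba)
  have hcomm_ab : Commute a b := by
    have : a * b = b * a := by
      have h1 : a + b + a * b = a + b + b * a := by rw [habm, hbam]
      exact add_left_cancel h1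
    exact this
  have hab' : a + b = -(a * b) := eq_neg_of_add_eq_zero_left habm
  set p : ℝ → A := fun t => 1 + t • a with hpdef
  set q : ℝ → A := fun t => 1 + t • b with hqdef
  have hkey : ∀ s : ℝ, p s * q s = 1 + (s * s - s) • (a * b) := by
    intro s
    have h1 : p s * q s = 1 + (s • a + s • b) + (s * s) • (a * b) := by
      rw [hpdef, hqdef]
      simp only []
      have hss : (s • a) * (s • b) = (s * s) • (a * b) := by
        rw [smul_mul_assoc, mul_smul_comm, smul_smul]
      rw [add_mul, one_mul, mul_add, mul_one, hss]
      abel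
    rw [h1, ← smul_add, hab', smul_neg, sub_smul]
    abel
  have hPP : ∀ t : ℝ, p t * q t = p (1 - t) * q (1 - t) := by
    intro t
    have hts : (t * t - t : ℝ) = (1 - t) * (1 - t) - (1 - t) := by ring
    rw [hkey, hkey, ← hts]
  have hq_unit : ∀ t ∈ Icc (0:ℝ) 1, IsUnit (q t) := by
    intro t ht
    rw [hqdef]
    simp only []
    rw [← hexpN t ht]
    letI : NormedAlgebra ℚ A := NormedAlgebra.restrictScalars ℚ ℂ A
    exact isUnit_exp (N t)
  have hp_unit : ∀ t ∈ Icc (0:ℝ) 1, IsUnit (p t) := by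
    intro t ht
    rw [hpdef]
    simp only []
    rw [← hexpL t ht]
    letI : NormedAlgebra ℚ A := NormedAlgebra.restrictScalars ℚ ℂ A
    exact isUnit_exp (L t)
  have hpD : ∀ t ∈ Ioo (-R) R, p t * D t = a := by
    intro t ht
    have hc : Commute (D t) (p t) := by
      rw [hpdef]
      exact Commute.add_right (Commute.one_right (D t)) (((hcomm_aD t ht).symm).smul_right t)
    rw [← hc.eq]
    exact hDmul t ht
  have hψD : ∀ t ∈ Ioo (-R) R, ψ (D t) * q t = b := by
    intro t ht
    have h1 := congrArg ψ (hpD t ht)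
    rw [hψm] at h1
    rw [hpdef] at h1
    simp only [] at h1
    rw [hψp t] at h1
    rw [hqdef]
    exact h1
  have hCpq : ∀ s t : ℝ, Commute (p s) (q t) := by
    intro s t
    have h1 : Commute (s • a) (t • b) := (hcomm_ab.smul_left s).smul_right t
    exact Commute.add_right (Commute.one_right _)
      (Commute.add_left (Commute.one_left _) h1)
  have e1 : ∀ s : ℝ, a * q s = a + s • (a * b) := by
    intro s
    rw [hqdef]
    simp only []
    rw [mul_add, mul_one, mul_smul_comm]
  have e2 : ∀ s : ℝ, b * p s = b + s • (a * b) := by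
    intro s
    rw [hpdef]
    simp only []
    rw [mul_add, mul_one, mul_smul_comm, ← hcomm_ab.eq]
  have hW0 : ∀ t ∈ Icc (0:ℝ) 1,
      D t + ψ (D t) + (D (1 - t) + ψ (D (1 - t))) = 0 := by
    intro t ht
    have ht' := hIccIoo ht
    have ht2 : (1 - t) ∈ Icc (0:ℝ) 1 := ⟨by linarith [ht.2], by linarith [ht.1]⟩
    have ht2' := hIccIoo ht2
    have hsum : (D t + ψ (D t) + (D (1 - t) + ψ (D (1 - t)))) * (p t * q t) = 0 := by
      have d1 : D t * (p t * q t) = a * q t := by rw [← mul_assoc, hDmul t ht']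
      have d2 : ψ (D t) * (p t * q t) = b * p t := by
        rw [(hCpq t t).eq, ← mul_assoc, hψD t ht']
      have d3 : D (1 - t) * (p t * q t) = a * q (1 - t) := by
        rw [hPP t, ← mul_assoc, hDmul (1 - t) ht2']
      have d4 : ψ (D (1 - t)) * (p t * q t) = b * p (1 - t) := by
        rw [hPP t, (hCpq (1 - t) (1 - t)).eq, ← mul_assoc, hψD (1 - t) ht2']
      have expand : ∀ x y z w P : A, (x + y + (z + w)) * P
          = x * P + (y * P + (z * P + w * P)) := by intros; noncomm_ring
      rw [expand, d1, d2, d3, d4, e1, e2, e1, e2]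
      have h2 : t • (a * b) + (1 - t) • (a * b) = a * b := by
        rw [← add_smul]; norm_num
      have h3 : a + t • (a * b) + (b + t • (a * b) +
          (a + (1 - t) • (a * b) + (b + (1 - t) • (a * b))))
          = (a + b + (t • (a * b) + (1 - t) • (a * b)))
            + (a + b + (t • (a * b) + (1 - t) • (a * b))) := by abel
      rw [h3, h2, habm, add_zero]
    have hPunit : IsUnit (p t * q t) := (hp_unit t ht).mul (hq_unit t ht)
    obtain ⟨v, hv⟩ := hPunit
    rw [← hv] at hsum
    exact (Units.mul_left_eq_zero v).mp hsum
  -- the functions S and T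
  set S : ℝ → A := fun t => L t + N t with hSdef
  have hSderiv : ∀ t ∈ Ioo (-R) R, HasDerivAt S (D t + ψ (D t)) t := fun t ht =>
    (hLderiv t ht).add (hNderiv t ht)
  set T : ℝ → A := fun t => S t - S (1 - t) with hTdef
  have hTderiv : ∀ t ∈ Icc (0:ℝ) 1, HasDerivAt T 0 t := by
    intro t ht
    have ht' := hIccIoo ht
    have ht2 : (1 - t) ∈ Icc (0:ℝ) 1 := ⟨by linarith [ht.2], by linarith [ht.1]⟩
    have ht2' := hIccIoo ht2
    have hinner : HasDerivAt (fun u : ℝ => 1 - u) (-1) t := by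
      simpa using (hasDerivAt_id t).const_sub 1
    have h2 : HasDerivAt (fun u => S (1 - u))
        ((-1 : ℝ) • (D (1 - t) + ψ (D (1 - t)))) t :=
      (hSderiv (1 - t) ht2').scomp t hinner
    have h3 := (hSderiv t ht').sub h2
    have h4 : D t + ψ (D t) - (-1 : ℝ) • (D (1 - t) + ψ (D (1 - t)))
        = D t + ψ (D t) + (D (1 - t) + ψ (D (1 - t))) := by
      rw [neg_one_smul, sub_neg_eq_add]
    rw [h4, hW0 t ht] at h3
    exact h3
  have hTconst := constant_of_has_deriv_right_zero (f := T) (a := 0) (b := 1)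
    (fun x hx => (hTderiv x hx).continuousAt.continuousWithinAt)
    (fun x hx => (hTderiv x ⟨hx.1, le_of_lt hx.2⟩).hasDerivWithinAt)
  have hS0 : S 0 = 0 := by
    rw [hSdef]
    simp only [hNdef]
    rw [hL0, map_zero, add_zero]
  have hT10 : T 1 = T 0 := hTconst 1 ⟨zero_le_one, le_refl 1⟩
  have hS1 : S 1 = 0 := by
    have h1 : S 1 - S 0 = S 0 - S 1 := by
      have := hT10
      rw [hTdef] at this
      simpa using this
    rw [hS0] at h1
    have h2 : S 1 + S 1 = 0 := by
      have : S 1 - 0 + (S 1 - 0) = S 1 - 0 + (0 - S 1) := by rw [h1]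
      simpa using this
    have h3 : (2 : ℝ) • S 1 = 0 := by rw [two_smul]; exact h2
    exact (smul_eq_zero.mp h3).resolve_left two_ne_zero
  refine ⟨L 1, ?_, ?_⟩
  · have : L 1 + ψ (L 1) = 0 := hS1
    exact eq_neg_of_add_eq_zero_right this
  · have h1 := hexpL 1 ⟨zero_le_one, le_refl 1⟩
    rw [one_smul] at h1
    exact h1

end Core



open ContinuousLinearMap

variable {H : Type*} [NormedAddCommGroup H] [InnerProductSpace ℂ H] [CompleteSpace H]

/-- The `J`-adjoint `T^# = J T* J`. -/
noncomputable def sharp (J T : H →L[ℂ] H) : H →L[ℂ] H :=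
  J ∘L (ContinuousLinearMap.adjoint T) ∘L J

/-- If `U` is a bounded `J`-unitary operator with `‖U − I‖ < 1`, then `U = exp X` for some
`J`-antihermitian `X`. -/
theorem stmt0 (J U : H →L[ℂ] H)
    (hJsa : ContinuousLinearMap.adjoint J = J) (hJ2 : J ∘L J = 1)
    (hUJ : (ContinuousLinearMap.adjoint U) ∘L J ∘L U = J)
    (hUinv : ∃ V : H →L[ℂ] H, U ∘L V = 1 ∧ V ∘L U = 1)
    (hU : ‖U - 1‖ < 1) :
    ∃ X : H →L[ℂ] H, sharp J X = -X ∧ NormedSpace.exp X = U := by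
  by_cases hU1 : U = 1
  · refine ⟨0, ?_, ?_⟩
    · simp [sharp]
    · rw [NormedSpace.exp_zero, hU1]
  · obtain ⟨V, hUV, hVU⟩ := hUinv
    have hJJ : J * J = 1 := hJ2
    -- the J-adjoint as a continuous real-linear map
    set Ψlin : (H →L[ℂ] H) →ₗ[ℝ] (H →L[ℂ] H) :=
      { toFun := fun T => J ∘L (ContinuousLinearMap.adjoint T) ∘L J
        map_add' := by
          intro x y
          show J ∘L (adjoint (x + y)) ∘L J
            = J ∘L (adjoint x) ∘L J + J ∘L (adjoint y) ∘L J
          rw [map_add, ContinuousLinearMap.add_comp, ContinuousLinearMap.comp_add]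
        map_smul' := by
          intro c x
          show J ∘L (adjoint (c • x)) ∘L J = c • (J ∘L (adjoint x) ∘L J)
          have h1 : adjoint ((c : ℝ) • x) = (c : ℝ) • adjoint x := by
            rw [← Complex.coe_smul, map_smulₛₗ, Complex.conj_ofReal, Complex.coe_smul]
          rw [h1, ContinuousLinearMap.smul_comp, ContinuousLinearMap.comp_smul] }
      with hΨlin
    have hbound : ∀ T : H →L[ℂ] H, ‖Ψlin T‖ ≤ ‖J‖ * ‖J‖ * ‖T‖ := by
      intro T
      have h1 : ‖J ∘L (adjoint T) ∘L J‖ ≤ ‖J‖ * ‖(adjoint T) ∘L J‖ :=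
        ContinuousLinearMap.opNorm_comp_le _ _
      have h2 : ‖(adjoint T) ∘L J‖ ≤ ‖adjoint T‖ * ‖J‖ :=
        ContinuousLinearMap.opNorm_comp_le _ _
      have h3 : ‖adjoint T‖ = ‖T‖ := by
        exact ContinuousLinearMap.adjoint.norm_map T
      calc ‖Ψlin T‖ ≤ ‖J‖ * ‖(adjoint T) ∘L J‖ := h1
      _ ≤ ‖J‖ * (‖adjoint T‖ * ‖J‖) :=
          mul_le_mul_of_nonneg_left h2 (norm_nonneg J)
      _ = ‖J‖ * ‖J‖ * ‖T‖ := by rw [h3]; ring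
    set Ψ : (H →L[ℂ] H) →L[ℝ] (H →L[ℂ] H) :=
      Ψlin.mkContinuous (‖J‖ * ‖J‖) hbound with hΨ
    have hΨapp : ∀ T : H →L[ℂ] H, Ψ T = J * adjoint T * J := fun T => rfl
    have hΨ1 : Ψ 1 = 1 := by
      rw [hΨapp]
      have : adjoint (1 : H →L[ℂ] H) = 1 :=
        ContinuousLinearMap.adjoint_id (𝕜 := ℂ) (E := H)
      rw [this, mul_one, hJJ]
    have hΨm : ∀ x y : H →L[ℂ] H, Ψ (x * y) = Ψ y * Ψ x := by
      intro x y
      rw [hΨapp, hΨapp, hΨapp]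
      have h1 : adjoint (x * y) = adjoint y * adjoint x := by
        rw [ContinuousLinearMap.mul_def, ContinuousLinearMap.adjoint_comp,
          ContinuousLinearMap.mul_def]
      rw [h1]
      have h2 : J * adjoint y * J * (J * adjoint x * J)
          = J * adjoint y * (J * J) * adjoint x * J := by noncomm_ring
      rw [h2, hJJ, mul_one]
      noncomm_ring
    have hΨs : ∀ (c : ℂ) (x : H →L[ℂ] H), Ψ (c • x) = (starRingEnd ℂ c) • Ψ x := by
      intro c x
      rw [hΨapp, hΨapp, map_smulₛₗ]
      rw [ContinuousLinearMap.mul_def, ContinuousLinearMap.mul_def,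
        ContinuousLinearMap.mul_def, ContinuousLinearMap.mul_def,
        ContinuousLinearMap.comp_smul, ContinuousLinearMap.smul_comp]
    have hΨU : Ψ U = V := by
      rw [hΨapp]
      have h1 : adjoint U * (J * U) = J := hUJ
      have h2 : adjoint U * J = J * V := by
        calc adjoint U * J = adjoint U * (J * (U * V)) := by
              rw [show U * V = 1 from hUV, mul_one]
        _ = adjoint U * (J * U) * V := by noncomm_ring
        _ = J * V := by rw [h1]
      calc J * adjoint U * J = J * (adjoint U * J) := by rw [mul_assoc]
      _ = J * (J * V) := by rw [h2]
      _ = J * J * V := by rw [mul_assoc]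
      _ = V := by rw [hJJ, one_mul]
    have ha0 : U - 1 ≠ 0 := sub_ne_zero.mpr hU1
    have hΨa : Ψ (U - 1) = V - 1 := by rw [map_sub, hΨU, hΨ1]
    have hab : (1 + (U - 1)) * (1 + Ψ (U - 1)) = 1 := by
      rw [hΨa, add_sub_cancel, add_sub_cancel]
      exact hUV
    have hba : (1 + Ψ (U - 1)) * (1 + (U - 1)) = 1 := by
      rw [hΨa, add_sub_cancel, add_sub_cancel]
      exact hVU
    obtain ⟨X, hX1, hX2⟩ := core Ψ hΨ1 hΨm hΨs (U - 1) hU ha0 hab hba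
    refine ⟨X, ?_, ?_⟩
    · exact hX1
    · rw [hX2, add_sub_cancel]
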